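/- If φ : [0,∞) → [0,∞) is nondecreasing and f : X^m → X satisfies d(f(x), f(y)) ≤ φ(d_m(x,y)) for all x,y ∈ X^m, and φ^(k)(t) → 0 for every t > 0, then f is continuous. -/

import Mathlib

open Filter

/-- A generalized Matkowski contraction `f : X^m → X` (with the maximum metric on
`X^m`, which is the product metric on `Fin m → X`) is continuous. -/
theorem stmt2 {X : Type*} [MetricSpace X] {m : ℕ}
    (φ : ℝ → ℝ) (hφ_mono : MonotoneOn φ (Set.Ici 0))
    (hφ_nonneg : ∀ t, 0 ≤ t → 0 ≤ φ t)
    (hφ_iter : ∀ t > 0, Tendsto (fun k => φ^[k] t) atTop (nhds 0))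
    (f : (Fin m → X) → X)
    (hf : ∀ x y : Fin m → X, dist (f x) (f y) ≤ φ (dist x y)) :
    Continuous f := by
  -- Step 1: φ t < t for all t > 0.
  have hlt : ∀ t, 0 < t → φ t < t := by
    intro t ht
    by_contra h
    push_neg at h
    have hkey : ∀ k, t ≤ φ^[k] t := by
      intro k
      induction k with
      | zero => simp
      | succ k ih =>
        rw [Function.iterate_succ_apply']
        exact le_trans h (hφ_mono ht.le (le_trans ht.le ih) ih)
    have := ge_of_tendsto (hφ_iter t ht) (Eventually.of_forall hkey)
    linarith
  -- Step 2: φ 0 = 0.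
  have h0 : φ 0 = 0 := by
    by_contra h
    have h0' : 0 < φ 0 := lt_of_le_of_ne (hφ_nonneg 0 le_rfl) (Ne.symm h)
    have := hφ_mono (Set.mem_Ici.mpr (le_refl (0:ℝ))) h0'.le h0'.le
    have := hlt _ h0'
    linarith
  -- Step 3: f is 1-Lipschitz.
  have : LipschitzWith 1 f := by
    apply LipschitzWith.of_dist_le_mul
    intro x y
    rw [NNReal.coe_one, one_mul]
    rcases eq_or_lt_of_le (dist_nonneg : (0:ℝ) ≤ dist x y) with h | h
    · calc dist (f x) (f y) ≤ φ (dist x y) := hf x y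
        _ = 0 := by rw [← h, h0]
        _ ≤ dist x y := dist_nonneg
    · exact le_trans (hf x y) (hlt _ h).le
  exact this.continuous
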